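/- For n ∈ {2, 3}, the complex number η = 2 + ζ_{2n} (with ζ_4 = i or ζ_6 = e^{iπ/3}) has irrational argument: arg(2 + ζ_{2n}) is not a rational multiple of π. -/

import Mathlib

open Complex

private lemma im_pow_eq_zero {z : ℂ} {q : ℚ} (h : z.arg = q * Real.pi) :
    (z ^ (2 * q.den)).im = 0 := by
  have hz : (‖z‖ : ℂ) * Complex.exp (z.arg * I) = z :=
    Complex.norm_mul_exp_arg_mul_I z
  have hden : (q.den : ℂ) * (q : ℂ) = (q.num : ℂ) := by
    have h1 : ((q.den * q : ℚ) : ℂ) = ((q.num : ℚ) : ℂ) := by rw [Rat.den_mul_eq_num]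
    push_cast at h1
    exact h1
  have hexp : Complex.exp (z.arg * I) ^ (2 * q.den) = 1 := by
    rw [← Complex.exp_nat_mul, h]
    have harg : ((2 * q.den : ℕ) : ℂ) * (((q : ℝ) : ℂ) * (Real.pi : ℂ) * I)
        = (q.num : ℂ) * (2 * (Real.pi : ℂ) * I) := by
      rw [← hden]; push_cast; ring
    rw [show (((q : ℝ) * Real.pi : ℝ) : ℂ) = ((q : ℝ) : ℂ) * (Real.pi : ℂ) by push_cast; ring,
      harg]
    exact_mod_cast Complex.exp_int_mul_two_pi_mul_I q.num
  have : z ^ (2 * q.den)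
      = ((‖z‖ : ℝ) : ℂ) ^ (2 * q.den) * Complex.exp (z.arg * I) ^ (2 * q.den) := by
    rw [← mul_pow, hz]
  rw [this, hexp, mul_one, ← Complex.ofReal_pow, Complex.ofReal_im]

private lemma gauss_pair : ∀ m : ℕ,
    (((((⟨2, 1⟩ : GaussianInt) ^ (m + 1)).re : ℤ) : ZMod 5) = 2
      ∧ ((((⟨2, 1⟩ : GaussianInt) ^ (m + 1)).im : ℤ) : ZMod 5) = 1)
    ∨ (((((⟨2, 1⟩ : GaussianInt) ^ (m + 1)).re : ℤ) : ZMod 5) = 3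
      ∧ ((((⟨2, 1⟩ : GaussianInt) ^ (m + 1)).im : ℤ) : ZMod 5) = 4) := by
  intro m
  induction m with
  | zero => left; constructor <;> decide
  | succ n ih =>
    rw [pow_succ]
    rcases ih with ⟨h1, h2⟩ | ⟨h1, h2⟩ <;>
      [right; left] <;>
      constructor <;>
      simp only [Zsqrtd.re_mul, Zsqrtd.im_mul] <;>
      push_cast <;>
      rw [h1, h2] <;> decide

private lemma eis_pair : ∀ m : ℕ,
    ((((((⟨5, 1⟩ : Zsqrtd (-3)) ^ (m + 1)).re : ℤ) : ZMod 7),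
      ((((⟨5, 1⟩ : Zsqrtd (-3)) ^ (m + 1)).im : ℤ) : ZMod 7))
      ∈ ({(5, 1), (1, 3), (3, 2), (2, 6), (6, 4), (4, 5)} : Set (ZMod 7 × ZMod 7))) := by
  intro m
  induction m with
  | zero =>
    simp only [Set.mem_insert_iff, Set.mem_singleton_iff, Prod.mk.injEq]
    left; constructor <;> decide
  | succ n ih =>
    rw [pow_succ]
    simp only [Set.mem_insert_iff, Set.mem_singleton_iff, Prod.mk.injEq] at ih ⊢
    simp only [Zsqrtd.re_mul, Zsqrtd.im_mul]
    push_cast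
    rcases ih with ⟨h1, h2⟩ | ⟨h1, h2⟩ | ⟨h1, h2⟩ | ⟨h1, h2⟩ | ⟨h1, h2⟩ | ⟨h1, h2⟩ <;>
      rw [h1, h2] <;> decide

/-- For `n ∈ {2,3}`, the number `2 + ζ_{2n}` has irrational argument. -/
theorem stmt8 :
    (¬ ∃ q : ℚ, (2 + Complex.I).arg = q * Real.pi) ∧
    (¬ ∃ q : ℚ, (2 + Complex.exp (Real.pi * Complex.I / 3)).arg = q * Real.pi) := by
  constructor
  · rintro ⟨q, hq⟩
    have h0 := im_pow_eq_zero hq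
    obtain ⟨m, hm⟩ := Nat.exists_eq_succ_of_ne_zero
      (show 2 * q.den ≠ 0 by positivity)
    have hz : (2 + Complex.I) = ((⟨2, 1⟩ : GaussianInt) : ℂ) := by
      rw [GaussianInt.toComplex_def']; push_cast; ring
    rw [hz, ← map_pow, hm] at h0
    have him : ((((⟨2, 1⟩ : GaussianInt) ^ (m + 1)).im : ℤ) : ℝ) = 0 := by
      rw [GaussianInt.intCast_im]; exact h0
    have him0 : (((⟨2, 1⟩ : GaussianInt) ^ (m + 1)).im : ℤ) = 0 := by exact_mod_cast him
    rcases gauss_pair m with ⟨_, h⟩ | ⟨_, h⟩ <;> rw [him0] at h <;> exact absurd h (by decide)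
  · rintro ⟨q, hq⟩
    have h0 := im_pow_eq_zero hq
    obtain ⟨m, hm⟩ := Nat.exists_eq_succ_of_ne_zero
      (show 2 * q.den ≠ 0 by positivity)
    set r : { r : ℂ // r * r = ((-3 : ℤ) : ℂ) } :=
      ⟨(Real.sqrt 3 : ℝ) * I, by
        push_cast
        rw [mul_mul_mul_comm, Complex.I_mul_I, ← Complex.ofReal_mul,
          Real.mul_self_sqrt (by norm_num)]
        push_cast; ring⟩
    set φ : Zsqrtd (-3) →+* ℂ := Zsqrtd.lift r with hφ
    have hexp : Complex.exp ((Real.pi : ℂ) * I / 3)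
        = (1 / 2 : ℂ) + ((Real.sqrt 3 / 2 : ℝ) : ℂ) * I := by
      rw [show (Real.pi : ℂ) * I / 3 = ((Real.pi / 3 : ℝ) : ℂ) * I by push_cast; ring,
        Complex.exp_mul_I, ← Complex.ofReal_cos, ← Complex.ofReal_sin,
        Real.cos_pi_div_three, Real.sin_pi_div_three]
      push_cast; ring
    have hz : (2 + Complex.exp ((Real.pi : ℂ) * I / 3)) = (1 / 2 : ℂ) * φ ⟨5, 1⟩ := by
      rw [hexp]
      show _ = (1 / 2 : ℂ) * (((5 : ℤ) : ℂ) + ((1 : ℤ) : ℂ) * ((Real.sqrt 3 : ℝ) * I))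
      push_cast; ring
    rw [hz, mul_pow, hm, ← map_pow] at h0
    have hφpow : φ (⟨5, 1⟩ ^ (m + 1))
        = (((((⟨5, 1⟩ : Zsqrtd (-3)) ^ (m + 1)).re : ℤ) : ℂ)
          + ((((⟨5, 1⟩ : Zsqrtd (-3)) ^ (m + 1)).im : ℤ) : ℂ) * ((Real.sqrt 3 : ℝ) * I)) := rfl
    rw [hφpow] at h0
    have himval : (1 / 2 : ℂ) ^ (m + 1) * (((((⟨5, 1⟩ : Zsqrtd (-3)) ^ (m + 1)).re : ℤ) : ℂ)
          + ((((⟨5, 1⟩ : Zsqrtd (-3)) ^ (m + 1)).im : ℤ) : ℂ) * ((Real.sqrt 3 : ℝ) * I))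
        = ((((1 / 2 : ℝ) ^ (m + 1) * ((((⟨5, 1⟩ : Zsqrtd (-3)) ^ (m + 1)).re : ℤ) : ℝ) : ℝ)) : ℂ)
          + ((((1 / 2 : ℝ) ^ (m + 1) * ((((⟨5, 1⟩ : Zsqrtd (-3)) ^ (m + 1)).im : ℤ) : ℝ)
              * Real.sqrt 3 : ℝ)) : ℂ) * I := by
      push_cast; ring
    rw [himval] at h0
    simp only [Complex.add_im, Complex.ofReal_im, Complex.mul_im, Complex.I_re, Complex.I_im,
      Complex.ofReal_re, mul_zero, mul_one, zero_add, zero_mul, add_zero] at h0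
    have him0 : (((⟨5, 1⟩ : Zsqrtd (-3)) ^ (m + 1)).im : ℤ) = 0 := by
      have h2 : (1 / 2 : ℝ) ^ (m + 1) ≠ 0 := by positivity
      have h3 : Real.sqrt 3 ≠ 0 := by positivity
      have := mul_eq_zero.mp h0
      rcases this with h | h
      · rcases mul_eq_zero.mp h with h | h
        · exact absurd h h2
        · exact_mod_cast h
      · exact absurd h h3
    have hp := eis_pair m
    simp only [Set.mem_insert_iff, Set.mem_singleton_iff, Prod.mk.injEq] at hp
    rw [him0] at hp
    rcases hp with ⟨_, h⟩ | ⟨_, h⟩ | ⟨_, h⟩ | ⟨_, h⟩ | ⟨_, h⟩ | ⟨_, h⟩ <;>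
      exact absurd h (by decide)
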